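/- For nonnegative integers a, b, c, d and positive integer t, define G(a,b,c,d,t) = ∑_{j=0}^{t·min(a,d)} F(a,b,j,t)·F(c,d,-j,t), where F is the bounded-coordinate solution count. Then G(a,b,c,d,t) + G(b,a,d,c,t) = F(a+c,b+d,0,t) + F(a,b,0,t)·F(c,d,0,t). -/

import Mathlib

def F (a b : ℕ) (c : ℤ) (t : ℕ) : ℕ :=
  (Finset.univ.filter
    (fun x : Fin (a + b) → Fin (t + 1) => ∑ i, (x i : ℤ) = b * t + c)).card

/-- G(a,b,c,d,t) = ∑_{j=0}^{t·min(a,d)} F(a,b,j,t)·F(c,d,-j,t). -/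
def G (a b c d t : ℕ) : ℕ :=
  ∑ j ∈ Finset.range (t * min a d + 1), F a b (j : ℤ) t * F c d (-(j : ℤ)) t

open Finset

lemma sum_le_bound {n t : ℕ} (x : Fin n → Fin (t + 1)) :
    ∑ i, (x i : ℤ) ≤ (n : ℤ) * t := by
  calc ∑ i, (x i : ℤ) ≤ ∑ _i : Fin n, (t : ℤ) := by
        apply Finset.sum_le_sum; intro i _
        exact_mod_cast Nat.lt_succ_iff.mp (x i).isLt
    _ = (n : ℤ) * t := by simp [mul_comm]

lemma sum_nonneg' {n t : ℕ} (x : Fin n → Fin (t + 1)) :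
    0 ≤ ∑ i, (x i : ℤ) :=
  Finset.sum_nonneg fun i _ => by positivity

lemma F_eq_zero_of_neg {a b t : ℕ} {c : ℤ} (h : (b : ℤ) * t + c < 0) : F a b c t = 0 := by
  rw [F, Finset.card_eq_zero, Finset.filter_eq_empty_iff]
  intro x _
  have := sum_nonneg' x
  intro hx; linarith

lemma F_eq_zero_of_gt {a b t : ℕ} {c : ℤ} (h : ((a : ℤ) + b) * t < (b : ℤ) * t + c) :
    F a b c t = 0 := by
  rw [F, Finset.card_eq_zero, Finset.filter_eq_empty_iff]
  intro x _
  have hb := sum_le_bound x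
  have hc : ((a + b : ℕ) : ℤ) = (a : ℤ) + b := by push_cast; ring
  rw [hc] at hb
  intro hx; linarith

lemma F_rev (a b : ℕ) (c : ℤ) (t : ℕ) : F a b c t = F b a (-c) t := by
  rw [F, F]
  apply Finset.card_equiv (Equiv.arrowCongr (finCongr (Nat.add_comm a b)) Fin.revPerm)
  intro x
  simp only [Finset.mem_filter, Finset.mem_univ, true_and]
  have key : ∑ i : Fin (b + a),
      ((Equiv.arrowCongr (finCongr (Nat.add_comm a b)) Fin.revPerm x) i : ℤ)
      = ((a : ℤ) + b) * t - ∑ i, (x i : ℤ) := by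
    have h1 : ∀ j : Fin (t + 1), ((Fin.revPerm j : Fin (t + 1)) : ℤ) = (t : ℤ) - (j : ℤ) := by
      intro j
      have hj : (j : ℕ) ≤ t := Nat.lt_succ_iff.mp j.isLt
      simp only [Fin.revPerm_apply, Fin.val_rev]
      omega
    calc ∑ i : Fin (b + a),
        ((Equiv.arrowCongr (finCongr (Nat.add_comm a b)) Fin.revPerm x) i : ℤ)
        = ∑ i : Fin (b + a), ((t : ℤ) - (x ((finCongr (Nat.add_comm a b)).symm i) : ℤ)) := by
          apply Finset.sum_congr rfl; intro i _
          simp only [Equiv.arrowCongr_apply, Function.comp_apply]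
          exact h1 _
      _ = ∑ i : Fin (a + b), ((t : ℤ) - (x i : ℤ)) :=
          Equiv.sum_comp (finCongr (Nat.add_comm a b)).symm
            (fun i => (t : ℤ) - (x i : ℤ))
      _ = ((a : ℤ) + b) * t - ∑ i, (x i : ℤ) := by
          rw [Finset.sum_sub_distrib, Finset.sum_const, Finset.card_univ, Fintype.card_fin,
            nsmul_eq_mul]
          push_cast; ring
  rw [key]
  constructor
  · intro hx; rw [hx]; ring
  · intro hx
    have : ∑ i, (x i : ℤ) = ((a : ℤ) + b) * t - ((a : ℤ) * t + -c) := by linarith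
    rw [this]; ring

lemma F_split (a b c d t : ℕ) :
    F (a + c) (b + d) 0 t =
      ∑ j ∈ Finset.Icc (-((b : ℤ) * t)) ((a : ℤ) * t), F a b j t * F c d (-j) t := by
  classical
  set S : Finset ((Fin (a + b) → Fin (t + 1)) × (Fin (c + d) → Fin (t + 1))) :=
    Finset.univ.filter
      (fun p => (∑ i, (p.1 i : ℤ)) + (∑ i, (p.2 i : ℤ)) = ((b : ℤ) + d) * t) with hS
  have h : a + c + (b + d) = (a + b) + (c + d) := by omega
  have step1 : F (a + c) (b + d) 0 t = S.card := by
    rw [F]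
    refine Finset.card_equiv
      ((Equiv.arrowCongr (finCongr h) (Equiv.refl _)).trans
        ((Equiv.arrowCongr finSumFinEquiv.symm (Equiv.refl _)).trans
          (Equiv.sumArrowEquivProdArrow _ _ _))) ?_
    intro x
    simp only [hS, Finset.mem_filter, Finset.mem_univ, true_and, Equiv.trans_apply,
      Equiv.sumArrowEquivProdArrow_apply_fst, Equiv.sumArrowEquivProdArrow_apply_snd,
      Equiv.arrowCongr_apply, Equiv.symm_symm, Function.comp_apply, Equiv.refl_symm,
      Equiv.refl_apply]
    have hsum : (∑ i : Fin (a + b), (x ((finCongr h).symm (finSumFinEquiv (Sum.inl i))) : ℤ))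
        + (∑ i : Fin (c + d), (x ((finCongr h).symm (finSumFinEquiv (Sum.inr i))) : ℤ))
        = ∑ i, (x i : ℤ) := by
      rw [← Fintype.sum_sum_type (fun s : Fin (a + b) ⊕ Fin (c + d) =>
        (x ((finCongr h).symm (finSumFinEquiv s)) : ℤ))]
      rw [Equiv.sum_comp finSumFinEquiv (fun i => (x ((finCongr h).symm i) : ℤ))]
      exact Equiv.sum_comp (finCongr h).symm (fun i => (x i : ℤ))
    rw [hsum]
    constructor <;> intro hx <;> rw [hx] <;> push_cast <;> ring
  have step2 : S.card = ∑ j ∈ Finset.Icc (-((b : ℤ) * t)) ((a : ℤ) * t),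
      (S.filter fun p => (∑ i, (p.1 i : ℤ)) - (b : ℤ) * t = j).card := by
    apply Finset.card_eq_sum_card_fiberwise
    intro p _
    simp only [Finset.mem_coe, Finset.mem_Icc]
    have h1 := sum_le_bound p.1
    have hc : ((a + b : ℕ) : ℤ) = (a : ℤ) + b := by push_cast; ring
    rw [hc] at h1
    have h2 : ((a : ℤ) + b) * t = (a : ℤ) * t + (b : ℤ) * t := by ring
    constructor
    · linarith [sum_nonneg' p.1]
    · linarith
  rw [step1, step2]
  apply Finset.sum_congr rfl
  intro j _
  have hprod : (S.filter fun p => (∑ i, (p.1 i : ℤ)) - (b : ℤ) * t = j)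
      = (Finset.univ.filter fun x : Fin (a + b) → Fin (t + 1) =>
          ∑ i, (x i : ℤ) = (b : ℤ) * t + j) ×ˢ
        (Finset.univ.filter fun y : Fin (c + d) → Fin (t + 1) =>
          ∑ i, (y i : ℤ) = (d : ℤ) * t + (-j)) := by
    rw [← Finset.filter_product]
    ext p
    simp only [hS, Finset.mem_filter, Finset.mem_univ, true_and, Finset.filter_filter,
      Finset.mem_product]
    have hbd : ((b : ℤ) + d) * t = (b : ℤ) * t + (d : ℤ) * t := by ring
    constructor
    · rintro ⟨h1, h2⟩
      constructor <;> linarith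
    · rintro ⟨h1, h2⟩
      exact ⟨by linarith, by linarith⟩
  rw [hprod, Finset.card_product, F, F]

lemma sum_Icc_nat (n : ℕ) (g : ℤ → ℕ) :
    ∑ j ∈ Finset.Icc (0 : ℤ) (n : ℤ), g j = ∑ j ∈ Finset.range (n + 1), g (j : ℤ) := by
  refine Finset.sum_nbij' (fun j => j.toNat) (fun j => (j : ℤ)) ?_ ?_ ?_ ?_ ?_
  · intro x hx; simp only [Finset.mem_Icc] at hx; simp only [Finset.mem_range]
    omega
  · intro x hx; simp only [Finset.mem_range] at hx; simp only [Finset.mem_Icc]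
    omega
  · intro x hx; simp only [Finset.mem_Icc] at hx; (try dsimp only); omega
  · intro x _; (try dsimp only); omega
  · intro x hx; simp only [Finset.mem_Icc] at hx
    congr 1; omega

theorem stmt8 (a b c d t : ℕ) (ht : 1 ≤ t) :
    G a b c d t + G b a d c t = F (a + c) (b + d) 0 t + F a b 0 t * F c d 0 t := by
  classical
  have hG1 : G a b c d t = ∑ j ∈ Finset.Icc (0 : ℤ) ((a : ℤ) * t),
      F a b j t * F c d (-j) t := by
    rw [G, ← sum_Icc_nat (t * min a d) (fun j => F a b j t * F c d (-j) t)]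
    apply Finset.sum_subset
    · intro j hj
      simp only [Finset.mem_Icc] at *
      refine ⟨hj.1, le_trans hj.2 ?_⟩
      have hn : t * min a d ≤ a * t := by
        calc t * min a d ≤ t * a := Nat.mul_le_mul_left t (min_le_left a d)
          _ = a * t := Nat.mul_comm t a
      exact_mod_cast hn
    · intro j hj hnj
      simp only [Finset.mem_Icc, not_and, not_le] at hj hnj
      have hj2 := hnj hj.1
      push_cast at hj2
      rcases le_total d a with hda | had
      · rw [min_eq_right (show (d : ℤ) ≤ (a : ℤ) by exact_mod_cast hda)] at hj2
        have hz : (d : ℤ) * t + (-j) < 0 := by linarith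
        rw [F_eq_zero_of_neg hz, mul_zero]
      · rw [min_eq_left (show (a : ℤ) ≤ (d : ℤ) by exact_mod_cast had)] at hj2
        exfalso
        have h2 := hj.2
        have : (t : ℤ) * a = (a : ℤ) * t := by ring
        linarith
  have hG2 : G b a d c t = ∑ j ∈ Finset.Icc (-((b : ℤ) * t)) (0 : ℤ),
      F a b j t * F c d (-j) t := by
    rw [G, ← sum_Icc_nat (t * min b c) (fun j => F b a j t * F d c (-j) t)]
    calc ∑ j ∈ Finset.Icc (0 : ℤ) ((t * min b c : ℕ) : ℤ), F b a j t * F d c (-j) t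
        = ∑ j ∈ Finset.Icc (-((t * min b c : ℕ) : ℤ)) 0, F a b j t * F c d (-j) t := by
          refine Finset.sum_nbij' (fun j => -j) (fun j => -j) ?_ ?_ ?_ ?_ ?_
          · intro x hx; simp only [Finset.mem_Icc] at *; omega
          · intro x hx; simp only [Finset.mem_Icc] at *; omega
          · intro x _; ring
          · intro x _; ring
          · intro x _
            rw [neg_neg, show F a b (-x) t = F b a x t from by rw [F_rev a b (-x) t, neg_neg],
              show F c d x t = F d c (-x) t from F_rev c d x t]
      _ = ∑ j ∈ Finset.Icc (-((b : ℤ) * t)) 0, F a b j t * F c d (-j) t := by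
          apply Finset.sum_subset
          · intro j hj
            simp only [Finset.mem_Icc] at *
            refine ⟨?_, hj.2⟩
            have hn : t * min b c ≤ b * t := by
              calc t * min b c ≤ t * b := Nat.mul_le_mul_left t (min_le_left b c)
                _ = b * t := Nat.mul_comm t b
            have hcast : ((t * min b c : ℕ) : ℤ) ≤ (b : ℤ) * t := by exact_mod_cast hn
            linarith [hj.1]
          · intro j hj hnj
            simp only [Finset.mem_Icc, not_and, not_le] at hj hnj
            have hj1 : j < -((t * min b c : ℕ) : ℤ) := by
              by_contra hcon
              push_neg at hcon
              exact absurd hj.2 (not_le.mpr (hnj hcon))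
            push_cast at hj1
            rcases le_total c b with hcb | hbc
            · rw [min_eq_right (show (c : ℤ) ≤ (b : ℤ) by exact_mod_cast hcb)] at hj1
              have hz : ((c : ℤ) + d) * t < (d : ℤ) * t + (-j) := by
                have : (t : ℤ) * c = (c : ℤ) * t := by ring
                linarith
              rw [F_eq_zero_of_gt hz, mul_zero]
            · rw [min_eq_left (show (b : ℤ) ≤ (c : ℤ) by exact_mod_cast hbc)] at hj1
              exfalso
              have : (t : ℤ) * b = (b : ℤ) * t := by ring
              linarith [hj.1]
  have hsplit : ∑ j ∈ Finset.Icc (-((b : ℤ) * t)) ((a : ℤ) * t), F a b j t * F c d (-j) t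
      = (∑ j ∈ Finset.Icc (-((b : ℤ) * t)) (0 : ℤ), F a b j t * F c d (-j) t)
        + ∑ j ∈ Finset.Ioc (0 : ℤ) ((a : ℤ) * t), F a b j t * F c d (-j) t := by
    rw [← Finset.sum_union]
    · congr 1
      ext j
      simp only [Finset.mem_union, Finset.mem_Icc, Finset.mem_Ioc]
      have hbt : (0 : ℤ) ≤ (b : ℤ) * t := by positivity
      have hat : (0 : ℤ) ≤ (a : ℤ) * t := by positivity
      constructor
      · intro hj
        by_cases h0 : j ≤ 0
        · exact Or.inl ⟨hj.1, h0⟩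
        · exact Or.inr ⟨by omega, hj.2⟩
      · rintro (hj | hj)
        · exact ⟨hj.1, le_trans hj.2 hat⟩
        · exact ⟨le_trans (by linarith) (le_of_lt hj.1), hj.2⟩
    · rw [Finset.disjoint_left]
      intro j hj1 hj2
      simp only [Finset.mem_Icc, Finset.mem_Ioc] at hj1 hj2
      omega
  have hsplit0 : ∑ j ∈ Finset.Icc (0 : ℤ) ((a : ℤ) * t), F a b j t * F c d (-j) t
      = F a b 0 t * F c d 0 t
        + ∑ j ∈ Finset.Ioc (0 : ℤ) ((a : ℤ) * t), F a b j t * F c d (-j) t := by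
    rw [Finset.Icc_eq_cons_Ioc (by positivity), Finset.sum_cons]
    simp
  rw [hG1, hG2, F_split, hsplit, hsplit0]
  ring
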